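/- Let ρ : [0,1] → dom f be a searching path via regularization with penalty ψ and tuner λ, and let t₁, t₂ ∈ [0,1]. If f(ρ(t₁)) > f(ρ(t₂)), then ψ(ρ(t₁)) < ψ(ρ(t₂)) and ρ(t₁) lies in the interior of the upper region U⁺_f(ρ(t₂)). -/

import Mathlib

open scoped RealInnerProductSpace

/-- strict decrease of f forces strict increase of ψ, and ρ(t₁) lies in the interior of the upper region U⁺_f(ρ(t₂)). -/
theorem statement_4 (n : ℕ) (hn : 1 ≤ n)
    (f : EuclideanSpace ℝ (Fin n) → EReal)
    -- f is convex
    (hf_conv : ∀ x y : EuclideanSpace ℝ (Fin n), ∀ a b : ℝ, 0 ≤ a → 0 ≤ b → a + b = 1 →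
      f (a • x + b • y) ≤ (a : EReal) * f x + (b : EReal) * f y)
    -- f is proper: never −∞ and finite somewhere
    (hf_nebot : ∀ x, f x ≠ ⊥)
    (hf_proper : ∃ x, f x ≠ ⊤)
    -- the set of minimizers of f is nonempty
    (hf_argmin : ∃ x, ∀ y, f x ≤ f y)
    -- the effective domain of f is open
    (hf_domopen : IsOpen {x : EuclideanSpace ℝ (Fin n) | f x ≠ ⊤})
    -- ψ is a finite-valued convex function
    (ψ : EuclideanSpace ℝ (Fin n) → ℝ) (hψ_conv : ConvexOn ℝ Set.univ ψ)
    -- ρ is a searching path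
    (ρ : ℝ → EuclideanSpace ℝ (Fin n))
    (hρ_cont : ContinuousOn ρ (Set.Icc 0 1))
    (hρ_dom : ∀ t ∈ Set.Icc (0:ℝ) 1, f (ρ t) ≠ ⊤)
    -- λ is positive-valued
    (lam : ℝ → ℝ) (hlam : ∀ t ∈ Set.Icc (0:ℝ) 1, 0 < lam t)
    -- ρ is via regularization: for every t ∈ [0,1], ρ(t) minimizes f + λ(t)·ψ
    (hreg : ∀ t ∈ Set.Icc (0:ℝ) 1, ∀ y,
      f (ρ t) + ((lam t * ψ (ρ t) : ℝ) : EReal) ≤ f y + ((lam t * ψ y : ℝ) : EReal)) :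
    ∀ t₁ ∈ Set.Icc (0:ℝ) 1, ∀ t₂ ∈ Set.Icc (0:ℝ) 1,
      f (ρ t₂) < f (ρ t₁) →
        ψ (ρ t₁) < ψ (ρ t₂) ∧
        ρ t₁ ∈ interior {y : EuclideanSpace ℝ (Fin n) |
          ∃ xs : EuclideanSpace ℝ (Fin n), (∀ z, f (ρ t₂) + ((⟪xs, z - ρ t₂⟫ : ℝ) : EReal) ≤ f z) ∧
            0 ≤ ⟪xs, y - ρ t₂⟫} := by
  intro t₁ ht₁ t₂ ht₂ hlt
  have hψcont : Continuous ψ := by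
    rw [← continuousOn_univ]
    exact hψ_conv.continuousOn isOpen_univ
  set x₁ := ρ t₁ with hx₁
  set x₂ := ρ t₂ with hx₂
  have hfx₁t : f x₁ ≠ ⊤ := hρ_dom t₁ ht₁
  have hfx₂t : f x₂ ≠ ⊤ := hρ_dom t₂ ht₂
  have ha : f x₁ = ((f x₁).toReal : EReal) := ((f x₁).coe_toReal hfx₁t (hf_nebot _)).symm
  have hb : f x₂ = ((f x₂).toReal : EReal) := ((f x₂).coe_toReal hfx₂t (hf_nebot _)).symm
  set a : ℝ := (f x₁).toReal
  set b : ℝ := (f x₂).toReal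
  have hba : b < a := by
    rw [ha, hb] at hlt; exact_mod_cast hlt
  have hl1 := hlam t₁ ht₁
  have hl2 := hlam t₂ ht₂
  -- Part 1
  have h1 : ψ x₁ < ψ x₂ := by
    have h := hreg t₁ ht₁ x₂
    rw [ha, hb, ← EReal.coe_add, ← EReal.coe_add, EReal.coe_le_coe_iff] at h
    by_contra hcon
    push_neg at hcon
    have := mul_le_mul_of_nonneg_left hcon hl1.le
    linarith
  refine ⟨h1, ?_⟩
  set c : ℝ := lam t₂ * (ψ x₂ - ψ x₁) with hc
  have hcpos : 0 < c := by
    have : 0 < ψ x₂ - ψ x₁ := by linarith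
    positivity
  -- key minimization inequality at t₂
  have K : ∀ z, f z ≠ ⊤ → b + lam t₂ * (ψ x₂ - ψ z) ≤ (f z).toReal := by
    intro z hz
    have h := hreg t₂ ht₂ z
    have hzr : f z = ((f z).toReal : EReal) := ((f z).coe_toReal hz (hf_nebot _)).symm
    rw [hb, hzr, ← EReal.coe_add, ← EReal.coe_add, EReal.coe_le_coe_iff] at h
    linarith
  -- separation setup
  set A : Set (EuclideanSpace ℝ (Fin n) × ℝ) := {p | p.2 < lam t₂ * (ψ x₂ - ψ p.1)} with hA
  set B : Set (EuclideanSpace ℝ (Fin n) × ℝ) := {p | f p.1 ≤ ((b + p.2 : ℝ) : EReal)} with hB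
  have hAopen : IsOpen A := by
    have hcont : Continuous fun p : EuclideanSpace ℝ (Fin n) × ℝ => lam t₂ * (ψ x₂ - ψ p.1) :=
      continuous_const.mul (continuous_const.sub (hψcont.comp continuous_fst))
    exact isOpen_lt continuous_snd hcont
  have hAconv : Convex ℝ A := by
    intro p hp q hq α β hα hβ hαβ
    simp only [hA, Set.mem_setOf_eq] at hp hq ⊢
    have hψc := hψ_conv.2 (Set.mem_univ p.1) (Set.mem_univ q.1) hα hβ hαβ
    have h1' : (α • p + β • q).1 = α • p.1 + β • q.1 := rfl
    have h2' : (α • p + β • q).2 = α * p.2 + β * q.2 := rfl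
    rw [h1', h2']
    have key : α * p.2 + β * q.2 <
        α * (lam t₂ * (ψ x₂ - ψ p.1)) + β * (lam t₂ * (ψ x₂ - ψ q.1)) := by
      rcases eq_or_lt_of_le hα with hα0 | hα0
      · have hβ1 : β = 1 := by linarith
        rw [← hα0, hβ1]; simpa using hq
      · rcases eq_or_lt_of_le hβ with hβ0 | hβ0
        · have hα1 : α = 1 := by linarith
          rw [← hβ0, hα1]; simpa using hp
        · have := mul_lt_mul_of_pos_left hp hα0
          have := mul_lt_mul_of_pos_left hq hβ0
          linarith
    have : α * (lam t₂ * (ψ x₂ - ψ p.1)) + β * (lam t₂ * (ψ x₂ - ψ q.1)) ≤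
        lam t₂ * (ψ x₂ - ψ (α • p.1 + β • q.1)) := by
      have h3 : ψ (α • p.1 + β • q.1) ≤ α * ψ p.1 + β * ψ q.1 := by
        simpa [smul_eq_mul] using hψc
      have expand : α * (lam t₂ * (ψ x₂ - ψ p.1)) + β * (lam t₂ * (ψ x₂ - ψ q.1))
          = lam t₂ * ((α + β) * ψ x₂ - (α * ψ p.1 + β * ψ q.1)) := by ring
      rw [hαβ, one_mul] at expand
      have hmono := mul_le_mul_of_nonneg_left
        (show ψ x₂ - (α * ψ p.1 + β * ψ q.1) ≤ ψ x₂ - ψ (α • p.1 + β • q.1) by linarith) hl2.le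
      linarith
    linarith
  have hBconv : Convex ℝ B := by
    intro p hp q hq α β hα hβ hαβ
    simp only [hB, Set.mem_setOf_eq] at hp hq ⊢
    have hpt : f p.1 ≠ ⊤ := fun h => EReal.coe_ne_top _ (top_le_iff.mp (h ▸ hp))
    have hqt : f q.1 ≠ ⊤ := fun h => EReal.coe_ne_top _ (top_le_iff.mp (h ▸ hq))
    have hpr : f p.1 = ((f p.1).toReal : EReal) := ((f p.1).coe_toReal hpt (hf_nebot _)).symm
    have hqr : f q.1 = ((f q.1).toReal : EReal) := ((f q.1).coe_toReal hqt (hf_nebot _)).symm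
    have hpR : (f p.1).toReal ≤ b + p.2 := by rw [hpr] at hp; exact_mod_cast hp
    have hqR : (f q.1).toReal ≤ b + q.2 := by rw [hqr] at hq; exact_mod_cast hq
    have h1' : (α • p + β • q).1 = α • p.1 + β • q.1 := rfl
    have h2' : (α • p + β • q).2 = α * p.2 + β * q.2 := rfl
    rw [h1', h2']
    calc f (α • p.1 + β • q.1) ≤ (α : EReal) * f p.1 + (β : EReal) * f q.1 :=
          hf_conv p.1 q.1 α β hα hβ hαβ
      _ = ((α * (f p.1).toReal + β * (f q.1).toReal : ℝ) : EReal) := by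
          rw [EReal.coe_add, EReal.coe_mul, EReal.coe_mul, ← hpr, ← hqr]
      _ ≤ ((b + (α * p.2 + β * q.2) : ℝ) : EReal) := by
          rw [EReal.coe_le_coe_iff]
          have h3 := mul_le_mul_of_nonneg_left hpR hα
          have h4 := mul_le_mul_of_nonneg_left hqR hβ
          have h5 : α * b + β * b = b := by rw [← add_mul, hαβ, one_mul]
          nlinarith [h3, h4, h5]
  have hdisj : Disjoint A B := by
    rw [Set.disjoint_left]
    intro p hpA hpB
    simp only [hA, hB, Set.mem_setOf_eq] at hpA hpB
    have hpt : f p.1 ≠ ⊤ := fun h => EReal.coe_ne_top _ (top_le_iff.mp (h ▸ hpB))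
    have hpr : f p.1 = ((f p.1).toReal : EReal) := ((f p.1).coe_toReal hpt (hf_nebot _)).symm
    have hpR : (f p.1).toReal ≤ b + p.2 := by rw [hpr] at hpB; exact_mod_cast hpB
    have := K p.1 hpt
    linarith
  obtain ⟨L, u, hLA, hLB⟩ := geometric_hahn_banach_open hAconv hAopen hBconv hdisj
  set T : EuclideanSpace ℝ (Fin n) →L[ℝ] ℝ := L.comp (ContinuousLinearMap.inl ℝ (EuclideanSpace ℝ (Fin n)) ℝ) with hT
  set s : ℝ := L ((0 : EuclideanSpace ℝ (Fin n)), (1 : ℝ)) with hs_def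
  have hLsplit : ∀ (z : EuclideanSpace ℝ (Fin n)) (r : ℝ), L (z, r) = T z + r * s := by
    intro z r
    have hzr : ((z, r) : EuclideanSpace ℝ (Fin n) × ℝ) = (z, (0:ℝ)) + r • ((0 : EuclideanSpace ℝ (Fin n)), (1 : ℝ)) := by
      simp [Prod.ext_iff]
    rw [hzr, map_add, map_smul]
    simp [hT, smul_eq_mul, hs_def]
  have hB0 : ((x₂, (0:ℝ)) : EuclideanSpace ℝ (Fin n) × ℝ) ∈ B := by
    simp only [hB, Set.mem_setOf_eq]
    rw [hb]; norm_num
  have hu₂ : u ≤ T x₂ := by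
    have := hLB _ hB0
    rwa [hLsplit, zero_mul, add_zero] at this
  have hAx₂ : ∀ ε : ℝ, 0 < ε → T x₂ - ε * s < u := by
    intro ε hε
    have hmem : ((x₂, -ε) : EuclideanSpace ℝ (Fin n) × ℝ) ∈ A := by
      simp only [hA, Set.mem_setOf_eq, sub_self, mul_zero]
      linarith
    have := hLA _ hmem
    rw [hLsplit] at this
    linarith
  have hs : 0 < s := by
    have := hAx₂ 1 one_pos
    linarith
  have hueq : u = T x₂ := by
    refine le_antisymm hu₂ ?_
    by_contra hcon
    push_neg at hcon
    have := hAx₂ ((T x₂ - u) / s) (div_pos (by linarith) hs)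
    rw [div_mul_cancel₀ _ (ne_of_gt hs)] at this
    linarith
  have hAx₁ : T x₁ + c * s ≤ u := by
    by_contra hcon
    push_neg at hcon
    set δ : ℝ := (T x₁ + c * s - u) / s with hδ
    have hδpos : 0 < δ := div_pos (by linarith) hs
    have hmem : ((x₁, c - δ) : EuclideanSpace ℝ (Fin n) × ℝ) ∈ A := by
      simp only [hA, Set.mem_setOf_eq, ← hc]
      linarith
    have := hLA _ hmem
    rw [hLsplit] at this
    have hδs : δ * s = T x₁ + c * s - u := by
      rw [hδ, div_mul_cancel₀ _ (ne_of_gt hs)]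
    have hexp : (c - δ) * s = c * s - δ * s := by ring
    linarith
  set xs : EuclideanSpace ℝ (Fin n) := (-(s⁻¹)) • (InnerProductSpace.toDual ℝ (EuclideanSpace ℝ (Fin n))).symm T with hxs
  have hinner : ∀ z : EuclideanSpace ℝ (Fin n), ⟪xs, z⟫ = -(s⁻¹) * T z := by
    intro z
    rw [hxs, real_inner_smul_left, InnerProductSpace.toDual_symm_apply]
  have hipd : ∀ z : EuclideanSpace ℝ (Fin n), ⟪xs, z - x₂⟫ = (T x₂ - T z) / s := by
    intro z
    rw [hinner, map_sub]
    field_simp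
    ring
  have hsub : ∀ z, f x₂ + ((⟪xs, z - x₂⟫ : ℝ) : EReal) ≤ f z := by
    intro z
    by_cases hz : f z = ⊤
    · rw [hz]; exact le_top
    · have hzr : f z = ((f z).toReal : EReal) := ((f z).coe_toReal hz (hf_nebot _)).symm
      set r : ℝ := (f z).toReal
      have hzB : ((z, r - b) : EuclideanSpace ℝ (Fin n) × ℝ) ∈ B := by
        simp only [hB, Set.mem_setOf_eq]
        have hrb : b + (r - b) = r := by ring
        rw [hrb, hzr]
      have hLz := hLB _ hzB
      rw [hLsplit, hueq] at hLz
      rw [hb, hzr, ← EReal.coe_add, EReal.coe_le_coe_iff, hipd]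
      have hq : (T x₂ - T z) / s ≤ r - b := (div_le_iff₀ hs).mpr (by linarith)
      linarith
  have hpos : 0 < ⟪xs, x₁ - x₂⟫ := by
    rw [hipd]
    rw [hueq] at hAx₁
    have : c * s ≤ T x₂ - T x₁ := by linarith
    have : c ≤ (T x₂ - T x₁) / s := (le_div_iff₀ hs).mpr (by linarith)
    linarith
  rw [mem_interior]
  refine ⟨{y : EuclideanSpace ℝ (Fin n) | 0 < ⟪xs, y - x₂⟫}, ?_, ?_, hpos⟩
  · intro y hy
    exact ⟨xs, hsub, le_of_lt hy⟩
  · exact isOpen_lt continuous_const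
      (Continuous.inner continuous_const (continuous_id.sub continuous_const))
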